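/- Under the standing hypotheses (G is a finite simple C4-free graph, a, b : V(G) → ℕ satisfy a(x) ≥ 2 and b(x) ≥ 2 for all x, d_G(x) = a(x) + b(x) − 1 for every vertex x, and G has no feasible pair), for any (A, B) ∈ 𝒫: either A* or B* consists of exactly one vertex; moreover, every vertex in V(G)∖A* is adjacent to at most one vertex of B*, and every vertex in V(G)∖B* is adjacent to at most one vertex of A*. -/

import Mathlib

open Finset
open scoped Classical

variable {V : Type*}

/-- `nbrIn G A x` is the number of neighbors of `x` lying in `A`, i.e. `d_A(x)`. -/
noncomputable def nbrIn (G : SimpleGraph V) (A : Finset V) (x : V) : ℕ :=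
  (A.filter fun y => G.Adj x y).card

/-- `G` contains no cycle of length four: there are no four distinct vertices
`w,x,y,z` with `wx, xy, yz, zw` all edges. -/
def C4Free (G : SimpleGraph V) : Prop :=
  ∀ w x y z : V, w ≠ x → w ≠ y → w ≠ z → x ≠ y → x ≠ z → y ≠ z →
    ¬(G.Adj w x ∧ G.Adj x y ∧ G.Adj y z ∧ G.Adj z w)

/-- `A` is `f`-good: every vertex of `A` has at least `f u` neighbors in `A`. -/
def IsGood (G : SimpleGraph V) (f : V → ℕ) (A : Finset V) : Prop :=
  ∀ u ∈ A, f u ≤ nbrIn G A u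

/-- `A` is `g`-degenerate: every non-empty subset `H ⊆ A` has a vertex `u`
with `d_H(u) ≤ g u`. -/
def IsDegenerate (G : SimpleGraph V) (g : V → ℤ) (A : Finset V) : Prop :=
  ∀ H ⊆ A, H.Nonempty → ∃ u ∈ H, (nbrIn G H u : ℤ) ≤ g u

/-- `(A,B)` is a partition of the vertex set: disjoint, non-empty, covering. -/
def IsPartition [Fintype V] (A B : Finset V) : Prop :=
  Disjoint A B ∧ A.Nonempty ∧ B.Nonempty ∧ A ∪ B = Finset.univ

/-- `(A,B)` is a feasible pair: disjoint non-empty sets with `A` being `a`-good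
and `B` being `b`-good. -/
def FeasiblePair (G : SimpleGraph V) (a b : V → ℕ) (A B : Finset V) : Prop :=
  Disjoint A B ∧ A.Nonempty ∧ B.Nonempty ∧ IsGood G a A ∧ IsGood G b B

/-- `(A,B)` is an `(a,b)`-partition: a partition with `A` being `(a-1)`-degenerate
and `B` being `(b-1)`-degenerate. -/
def ABPartition [Fintype V] (G : SimpleGraph V) (a b : V → ℕ) (A B : Finset V) : Prop :=
  IsPartition A B ∧ IsDegenerate G (fun x => (a x : ℤ) - 1) A ∧
    IsDegenerate G (fun x => (b x : ℤ) - 1) B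

/-- The number of edges of the subgraph of `G` induced on `A`. -/
noncomputable def edgesIn (G : SimpleGraph V) (A : Finset V) : ℕ :=
  ((A ×ˢ A).filter fun p => G.Adj p.1 p.2).card / 2

/-- The weight `w(A,B) = |E(G[A])| + |E(G[B])| + Σ_{x∈A} b(x) + Σ_{x∈B} a(x)`. -/
noncomputable def weight (G : SimpleGraph V) (a b : V → ℕ) (A B : Finset V) : ℕ :=
  edgesIn G A + edgesIn G B + ∑ x ∈ A, b x + ∑ x ∈ B, a x

/-- `(A,B)` belongs to `𝒫`: it is an `(a,b)`-partition of maximum weight among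
all `(a,b)`-partitions. -/
def MaxAB [Fintype V] (G : SimpleGraph V) (a b : V → ℕ) (A B : Finset V) : Prop :=
  ABPartition G a b A B ∧
    ∀ A' B' : Finset V, ABPartition G a b A' B' → weight G a b A' B' ≤ weight G a b A B

/-- `starSet G f A` is `A* = {x ∈ A : d_A(x) ≤ f(x) - 1}`. -/
noncomputable def starSet (G : SimpleGraph V) (f : V → ℕ) (A : Finset V) : Finset V :=
  A.filter fun x => nbrIn G A x < f x

section Aux

lemma nbrIn_mono (G : SimpleGraph V) {S T : Finset V} (h : S ⊆ T) (x : V) :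
    nbrIn G S x ≤ nbrIn G T x :=
  Finset.card_le_card (Finset.filter_subset_filter _ h)

lemma nbrIn_lt_card (G : SimpleGraph V) {H : Finset V} {u : V} (hu : u ∈ H) :
    nbrIn G H u < H.card := by
  have hsub : H.filter (fun y => G.Adj u y) ⊆ H.erase u := by
    intro y hy
    rw [Finset.mem_filter] at hy
    exact Finset.mem_erase.mpr ⟨fun h => G.loopless.irrefl u (h ▸ hy.2), hy.1⟩
  exact lt_of_le_of_lt (Finset.card_le_card hsub) (Finset.card_erase_lt_of_mem hu)

lemma good_card {G : SimpleGraph V} {a : V → ℕ} {H : Finset V}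
    (hg : IsGood G a H) (hne : H.Nonempty) (ha : ∀ x, 2 ≤ a x) : 3 ≤ H.card := by
  obtain ⟨u, hu⟩ := hne
  have h1 := hg u hu
  have h2 := nbrIn_lt_card G hu
  have h3 := ha u
  omega

lemma nbrIn_insert_of_not_adj {G : SimpleGraph V} {x u : V} (B : Finset V)
    (h : ¬ G.Adj x u) : nbrIn G (insert u B) x = nbrIn G B x := by
  unfold nbrIn
  rw [Finset.filter_insert, if_neg h]

lemma nbrIn_erase_of_not_adj {G : SimpleGraph V} {x u : V} (A : Finset V)
    (h : ¬ G.Adj x u) : nbrIn G (A.erase u) x = nbrIn G A x := by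
  unfold nbrIn
  rw [Finset.filter_erase, Finset.erase_eq_of_notMem]
  intro hc
  exact h (Finset.mem_filter.mp hc).2

lemma nbrIn_erase_self {G : SimpleGraph V} (A : Finset V) (u : V) :
    nbrIn G (A.erase u) u = nbrIn G A u :=
  nbrIn_erase_of_not_adj A (G.loopless.irrefl u)

lemma deg_split [Fintype V] (G : SimpleGraph V) {A B : Finset V} (hd : Disjoint A B)
    (hU : A ∪ B = Finset.univ) (x : V) : nbrIn G A x + nbrIn G B x = G.degree x := by
  have h1 : G.degree x = (Finset.univ.filter (G.Adj x)).card := by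
    rw [← SimpleGraph.neighborFinset_eq_filter]
    rfl
  rw [h1, ← hU, Finset.filter_union,
    Finset.card_union_of_disjoint (Finset.disjoint_filter_filter hd)]
  rfl

lemma edges_double (G : SimpleGraph V) (A : Finset V) :
    ((A ×ˢ A).filter fun p => G.Adj p.1 p.2).card = ∑ x ∈ A, nbrIn G A x := by
  rw [Finset.card_eq_sum_card_fiberwise (f := Prod.fst) (t := A)
    (fun p hp => (Finset.mem_product.mp (Finset.mem_filter.mp hp).1).1)]
  refine Finset.sum_congr rfl fun x hx => ?_
  have hfib : ((A ×ˢ A).filter fun p => G.Adj p.1 p.2).filter (fun p => p.1 = x)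
      = {x} ×ˢ (A.filter (G.Adj x)) := by
    ext ⟨p, q⟩
    simp only [Finset.mem_filter, Finset.mem_product, Finset.mem_singleton]
    constructor
    · rintro ⟨⟨⟨hp, hq⟩, hadj⟩, rfl⟩
      exact ⟨rfl, hq, hadj⟩
    · rintro ⟨rfl, hq, hadj⟩
      exact ⟨⟨⟨hx, hq⟩, hadj⟩, rfl⟩
  rw [hfib, Finset.card_product, Finset.card_singleton, one_mul]
  rfl

lemma sum_nbr_insert {G : SimpleGraph V} {A : Finset V} {x : V} (hx : x ∉ A) :
    ∑ y ∈ insert x A, nbrIn G (insert x A) y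
      = (∑ y ∈ A, nbrIn G A y) + 2 * nbrIn G A x := by
  rw [Finset.sum_insert hx]
  have h1 : nbrIn G (insert x A) x = nbrIn G A x := by
    unfold nbrIn
    rw [Finset.filter_insert, if_neg (G.loopless.irrefl x)]
  have h2 : ∀ y ∈ A, nbrIn G (insert x A) y
      = nbrIn G A y + (if G.Adj y x then 1 else 0) := by
    intro y _
    unfold nbrIn
    rw [Finset.filter_insert]
    by_cases h : G.Adj y x
    · rw [if_pos h, if_pos h,
        Finset.card_insert_of_notMem (fun hc => hx (Finset.mem_filter.mp hc).1)]
    · rw [if_neg h, if_neg h, add_zero]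
  rw [Finset.sum_congr rfl h2, Finset.sum_add_distrib]
  have h3 : (∑ y ∈ A, if G.Adj y x then 1 else 0) = nbrIn G A x := by
    rw [Finset.sum_boole]
    unfold nbrIn
    norm_num
    congr 1
    apply Finset.filter_congr
    intro y _
    rw [G.adj_comm]
  rw [h1, h3]
  omega

lemma edgesIn_insert {G : SimpleGraph V} {A : Finset V} {x : V} (hx : x ∉ A) :
    edgesIn G (insert x A) = edgesIn G A + nbrIn G A x := by
  have h1 := edges_double G (insert x A)
  have h2 := edges_double G A
  have h3 := sum_nbr_insert (G := G) hx
  unfold edgesIn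
  omega

lemma edgesIn_erase {G : SimpleGraph V} {A : Finset V} {x : V} (hx : x ∈ A) :
    edgesIn G A = edgesIn G (A.erase x) + nbrIn G A x := by
  conv_lhs => rw [← Finset.insert_erase hx]
  rw [edgesIn_insert (Finset.notMem_erase x A), nbrIn_erase_self]

lemma weight_comm (G : SimpleGraph V) (a b : V → ℕ) (A B : Finset V) :
    weight G a b A B = weight G b a B A := by
  unfold weight
  omega

lemma weight_move {G : SimpleGraph V} (a b : V → ℕ) {A B : Finset V} {u : V}
    (hu : u ∈ A) (hu' : u ∉ B) :
    weight G a b (A.erase u) (insert u B) + (nbrIn G A u + b u)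
      = weight G a b A B + (nbrIn G B u + a u) := by
  have h1 : edgesIn G A = edgesIn G (A.erase u) + nbrIn G A u := edgesIn_erase hu
  have h2 : edgesIn G (insert u B) = edgesIn G B + nbrIn G B u := edgesIn_insert hu'
  have h3 : ∑ x ∈ A.erase u, b x + b u = ∑ x ∈ A, b x := Finset.sum_erase_add A b hu
  have h4 : ∑ x ∈ insert u B, a x = a u + ∑ x ∈ B, a x := Finset.sum_insert hu'
  unfold weight
  omega

lemma degen_subset {G : SimpleGraph V} {g : V → ℤ} {A S : Finset V}
    (h : IsDegenerate G g A) (hs : S ⊆ A) : IsDegenerate G g S :=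
  fun H hH => h H (hH.trans hs)

lemma not_degen {G : SimpleGraph V} {g : V → ℤ} {A : Finset V}
    (h : ¬ IsDegenerate G g A) :
    ∃ H ⊆ A, H.Nonempty ∧ ∀ u ∈ H, g u < (nbrIn G H u : ℤ) := by
  unfold IsDegenerate at h
  push_neg at h
  exact h

lemma maxAB_symm [Fintype V] {G : SimpleGraph V} {a b : V → ℕ} {A B : Finset V}
    (h : MaxAB G a b A B) : MaxAB G b a B A := by
  obtain ⟨⟨⟨hd, hA, hB, hU⟩, hdA, hdB⟩, hmax⟩ := h
  refine ⟨⟨⟨hd.symm, hB, hA, by rw [Finset.union_comm]; exact hU⟩, hdB, hdA⟩, ?_⟩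
  rintro A' B' ⟨⟨hd', hA', hB', hU'⟩, h1, h2⟩
  have hle := hmax B' A' ⟨⟨hd'.symm, hB', hA', by rw [Finset.union_comm]; exact hU'⟩, h2, h1⟩
  calc weight G b a A' B' = weight G a b B' A' := (weight_comm G a b B' A').symm
    _ ≤ weight G a b A B := hle
    _ = weight G b a B A := weight_comm G a b A B

lemma exists_bgood [Fintype V] {G : SimpleGraph V} {a b : V → ℕ}
    (hdeg : ∀ x : V, G.degree x + 1 = a x + b x)
    {A B : Finset V} {u : V} (hAB : MaxAB G a b A B) (huA : u ∈ A)
    (hu : nbrIn G A u < a u) (hne : (A.erase u).Nonempty) :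
    ∃ T, T ⊆ insert u B ∧ T.Nonempty ∧ IsGood G b T ∧ u ∈ T := by
  obtain ⟨⟨⟨hd, hA, hB, hU⟩, hdA, hdB⟩, hmax⟩ := hAB
  have huB : u ∉ B := Finset.disjoint_left.mp hd huA
  have hsplit := deg_split G hd hU u
  have hdgu := hdeg u
  have hnd : ¬ IsDegenerate G (fun x => (b x : ℤ) - 1) (insert u B) := by
    intro hdB'
    have hdisj : Disjoint (A.erase u) (insert u B) := by
      rw [Finset.disjoint_left]
      intro v hv hv'
      rw [Finset.mem_erase] at hv
      rcases Finset.mem_insert.mp hv' with rfl | hv''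
      · exact hv.1 rfl
      · exact Finset.disjoint_left.mp hd hv.2 hv''
    have hU' : A.erase u ∪ insert u B = Finset.univ := by
      rw [Finset.eq_univ_iff_forall]
      intro v
      have hv : v ∈ A ∪ B := hU ▸ Finset.mem_univ v
      rw [Finset.mem_union] at hv
      rw [Finset.mem_union, Finset.mem_erase, Finset.mem_insert]
      by_cases hvu : v = u
      · tauto
      · tauto
    have hpart : ABPartition G a b (A.erase u) (insert u B) :=
      ⟨⟨hdisj, hne, ⟨u, Finset.mem_insert_self u B⟩, hU'⟩,
        degen_subset hdA (Finset.erase_subset u A), hdB'⟩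
    have hle := hmax _ _ hpart
    have hmove := weight_move (G := G) a b huA huB
    omega
  obtain ⟨T, hT, hTne, hTg⟩ := not_degen hnd
  have hgood : IsGood G b T := by
    intro v hv
    have h1 := hTg v hv
    omega
  have huT : u ∈ T := by
    by_contra h
    have hTB : T ⊆ B := fun v hv =>
      (Finset.mem_insert.mp (hT hv)).resolve_left (fun e => h (e ▸ hv))
    obtain ⟨v, hvT, hle⟩ := hdB T hTB hTne
    have h2 := hgood v hvT
    simp only at hle
    omega
  exact ⟨T, hT, hTne, hgood, huT⟩

lemma half_key [Fintype V] {G : SimpleGraph V} {a b : V → ℕ}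
    (ha : ∀ x : V, 2 ≤ a x)
    (hdeg : ∀ x : V, G.degree x + 1 = a x + b x)
    (hnf : ¬ ∃ A B : Finset V, FeasiblePair G a b A B)
    {A B : Finset V} (hAB : MaxAB G a b A B)
    {u y : V} (hu : u ∈ starSet G a A) (hy : y ∈ starSet G b B)
    (hadj : ¬ G.Adj u y)
    (hS : ∃ S, S ⊆ insert y (A.erase u) ∧ S.Nonempty ∧ IsGood G a S) : False := by
  obtain ⟨S, hSsub, hSne, hSg⟩ := hS
  obtain ⟨huA, hua⟩ := Finset.mem_filter.mp hu
  obtain ⟨hyB, hyb⟩ := Finset.mem_filter.mp hy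
  have hd := hAB.1.1.1
  have hdA := hAB.1.2.1
  have hyS : y ∈ S := by
    by_contra h
    have hSA : S ⊆ A := fun v hv => Finset.mem_of_mem_erase
      ((Finset.mem_insert.mp (hSsub hv)).resolve_left (fun e => h (e ▸ hv)))
    obtain ⟨v, hvS, hle⟩ := hdA S hSA hSne
    have h2 := hSg v hvS
    simp only at hle
    omega
  have hcard : 3 ≤ S.card := good_card hSg hSne ha
  have hAe : (A.erase u).Nonempty := by
    by_contra h
    rw [Finset.not_nonempty_iff_eq_empty] at h
    rw [h] at hSsub
    have := Finset.card_le_card hSsub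
    simp at this
    omega
  obtain ⟨T, hTsub, hTne, hTg, _⟩ := exists_bgood hdeg hAB huA hua hAe
  have hyu : ¬ G.Adj y u := fun h => hadj h.symm
  have hyT : y ∉ T := by
    intro h
    have h1 := hTg y h
    have h2 : nbrIn G T y ≤ nbrIn G (insert u B) y := nbrIn_mono G hTsub y
    have h3 : nbrIn G (insert u B) y = nbrIn G B y := nbrIn_insert_of_not_adj B hyu
    omega
  have hdisj : Disjoint S T := by
    rw [Finset.disjoint_left]
    intro v hvS hvT
    rcases Finset.mem_insert.mp (hSsub hvS) with rfl | hv
    · exact hyT hvT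
    · rcases Finset.mem_insert.mp (hTsub hvT) with rfl | hv'
      · exact (Finset.notMem_erase v A) hv
      · exact Finset.disjoint_left.mp hd (Finset.mem_of_mem_erase hv) hv'
  exact hnf ⟨S, T, hdisj, hSne, hTne, hSg, hTg⟩

lemma key_adj [Fintype V] {G : SimpleGraph V} {a b : V → ℕ}
    (ha : ∀ x : V, 2 ≤ a x) (hb : ∀ x : V, 2 ≤ b x)
    (hdeg : ∀ x : V, G.degree x + 1 = a x + b x)
    (hnf : ¬ ∃ A B : Finset V, FeasiblePair G a b A B)
    {A B : Finset V} (hAB : MaxAB G a b A B) :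
    ∀ u ∈ starSet G a A, ∀ y ∈ starSet G b B, G.Adj u y := by
  intro u hu y hy
  by_contra hadj
  obtain ⟨huA, hua⟩ := Finset.mem_filter.mp hu
  obtain ⟨hyB, hyb⟩ := Finset.mem_filter.mp hy
  have hd := hAB.1.1.1
  have hU := hAB.1.1.2.2.2
  have hmax := hAB.2
  have huB : u ∉ B := Finset.disjoint_left.mp hd huA
  have hyA : y ∉ A := fun h => Finset.disjoint_left.mp hd h hyB
  have huy : u ≠ y := fun h => huB (h ▸ hyB)
  have hyu : ¬ G.Adj y u := fun h => hadj h.symm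
  -- weight computation for the swap
  have e1 := weight_move (G := G) a b huA huB
  have hyB1 : y ∈ insert u B := Finset.mem_insert_of_mem hyB
  have hyA1 : y ∉ A.erase u := fun h => hyA (Finset.mem_of_mem_erase h)
  have e2 := weight_move (G := G) b a hyB1 hyA1
  rw [weight_comm G b a ((insert u B).erase y) (insert y (A.erase u)),
    weight_comm G b a (insert u B) (A.erase u)] at e2
  have hB1y : nbrIn G (insert u B) y = nbrIn G B y := nbrIn_insert_of_not_adj B hyu
  have hA1y : nbrIn G (A.erase u) y = nbrIn G A y := nbrIn_erase_of_not_adj A hyu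
  have hBe : (insert u B).erase y = insert u (B.erase y) :=
    Finset.erase_insert_of_ne huy
  rw [hB1y, hA1y, hBe] at e2
  have hsu := deg_split G hd hU u
  have hsy := deg_split G hd hU y
  have hdu := hdeg u
  have hdy := hdeg y
  set A2 := insert y (A.erase u) with hA2
  set B2 := insert u (B.erase y) with hB2
  have hg : weight G a b A B < weight G a b A2 B2 := by omega
  have hdisj2 : Disjoint A2 B2 := by
    rw [Finset.disjoint_left]
    intro v hv hv'
    rcases Finset.mem_insert.mp hv with rfl | hv1
    · rcases Finset.mem_insert.mp hv' with h | h
      · exact huy h.symm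
      · exact (Finset.notMem_erase v B) h
    · rcases Finset.mem_insert.mp hv' with rfl | h
      · exact (Finset.notMem_erase v A) hv1
      · exact Finset.disjoint_left.mp hd (Finset.mem_of_mem_erase hv1)
          (Finset.mem_of_mem_erase h)
  have hU2 : A2 ∪ B2 = Finset.univ := by
    rw [Finset.eq_univ_iff_forall]
    intro v
    have hv : v ∈ A ∪ B := hU ▸ Finset.mem_univ v
    rw [Finset.mem_union] at hv
    rw [Finset.mem_union, hA2, hB2, Finset.mem_insert, Finset.mem_insert,
      Finset.mem_erase, Finset.mem_erase]
    by_cases hvu : v = u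
    · tauto
    · by_cases hvy : v = y
      · tauto
      · tauto
  have hpart2 : IsPartition A2 B2 :=
    ⟨hdisj2, ⟨y, Finset.mem_insert_self y _⟩, ⟨u, Finset.mem_insert_self u _⟩, hU2⟩
  have hnab : ¬ (IsDegenerate G (fun x => (a x : ℤ) - 1) A2 ∧
      IsDegenerate G (fun x => (b x : ℤ) - 1) B2) := by
    rintro ⟨h1, h2⟩
    have := hmax A2 B2 ⟨hpart2, h1, h2⟩
    omega
  rcases not_and_or.mp hnab with h | h
  · obtain ⟨S, hSsub, hSne, hSg⟩ := not_degen h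
    have hSgood : IsGood G a S := by
      intro v hv
      have := hSg v hv
      omega
    exact half_key ha hdeg hnf hAB hu hy hadj ⟨S, hSsub, hSne, hSgood⟩
  · obtain ⟨T, hTsub, hTne, hTg⟩ := not_degen h
    have hTgood : IsGood G b T := by
      intro v hv
      have := hTg v hv
      omega
    have hnf' : ¬ ∃ A' B' : Finset V, FeasiblePair G b a A' B' := by
      rintro ⟨A', B', hd', hA', hB', g1, g2⟩
      exact hnf ⟨B', A', hd'.symm, hB', hA', g2, g1⟩
    have hdeg' : ∀ x : V, G.degree x + 1 = b x + a x := fun x => by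
      have := hdeg x; omega
    exact half_key hb hdeg' hnf' (maxAB_symm hAB) hy hu hyu ⟨T, hTsub, hTne, hTgood⟩

lemma star_nonempty [Fintype V] {G : SimpleGraph V} {f : V → ℕ} {A : Finset V}
    (hA : A.Nonempty) (hdA : IsDegenerate G (fun x => (f x : ℤ) - 1) A) :
    (starSet G f A).Nonempty := by
  obtain ⟨v, hv, hle⟩ := hdA A (le_refl A) hA
  simp only at hle
  exact ⟨v, Finset.mem_filter.mpr ⟨hv, by omega⟩⟩

end Aux

/-- Claim 5: for any `(A,B) ∈ 𝒫`, either `A*` or `B*` is a single vertex; moreover every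
vertex outside `A*` has at most one neighbor in `B*` and every vertex outside `B*` has at most
one neighbor in `A*`. -/
theorem star_singleton [Fintype V] (G : SimpleGraph V) (a b : V → ℕ)
    (hC4 : C4Free G) (ha : ∀ x : V, 2 ≤ a x) (hb : ∀ x : V, 2 ≤ b x)
    (hdeg : ∀ x : V, G.degree x + 1 = a x + b x)
    (hnf : ¬ ∃ A B : Finset V, FeasiblePair G a b A B)
    (A B : Finset V) (hAB : MaxAB G a b A B) :
    ((starSet G a A).card = 1 ∨ (starSet G b B).card = 1) ∧
    (∀ x : V, x ∉ starSet G a A → nbrIn G (starSet G b B) x ≤ 1) ∧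
    (∀ x : V, x ∉ starSet G b B → nbrIn G (starSet G a A) x ≤ 1) := by
  have hd := hAB.1.1.1
  have hAne := hAB.1.1.2.1
  have hBne := hAB.1.1.2.2.1
  have hdA := hAB.1.2.1
  have hdB := hAB.1.2.2
  have hAstar : (starSet G a A).Nonempty := star_nonempty hAne hdA
  have hBstar : (starSet G b B).Nonempty := star_nonempty hBne hdB
  have hkey := key_adj ha hb hdeg hnf hAB
  have hsubA : starSet G a A ⊆ A := Finset.filter_subset _ A
  have hsubB : starSet G b B ⊆ B := Finset.filter_subset _ B
  have hAB_ne : ∀ v ∈ starSet G a A, ∀ w ∈ starSet G b B, v ≠ w := by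
    intro v hv w hw e
    exact Finset.disjoint_left.mp hd (hsubA hv) (e ▸ hsubB hw)
  refine ⟨?_, ?_, ?_⟩
  · by_contra hcon
    push_neg at hcon
    obtain ⟨h1, h2⟩ := hcon
    have c1 : 1 < (starSet G a A).card := by
      have := Finset.card_pos.mpr hAstar
      omega
    have c2 : 1 < (starSet G b B).card := by
      have := Finset.card_pos.mpr hBstar
      omega
    obtain ⟨u, hu, v, hv, huv⟩ := Finset.one_lt_card.mp c1
    obtain ⟨y, hy, z, hz, hyz⟩ := Finset.one_lt_card.mp c2
    exact hC4 u y v z (hAB_ne u hu y hy) huv (hAB_ne u hu z hz)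
      (Ne.symm (hAB_ne v hv y hy)) hyz (hAB_ne v hv z hz)
      ⟨hkey u hu y hy, (hkey v hv y hy).symm, hkey v hv z hz, (hkey u hu z hz).symm⟩
  · intro x hx
    by_contra hcon
    have c2 : 1 < nbrIn G (starSet G b B) x := by omega
    obtain ⟨y, hy, z, hz, hyz⟩ := Finset.one_lt_card.mp c2
    obtain ⟨hy1, hy2⟩ := Finset.mem_filter.mp hy
    obtain ⟨hz1, hz2⟩ := Finset.mem_filter.mp hz
    obtain ⟨w, hw⟩ := hAstar
    have hxw : x ≠ w := fun e => hx (e ▸ hw)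
    exact hC4 x y w z hy2.ne hxw hz2.ne (Ne.symm (hAB_ne w hw y hy1)) hyz
      (hAB_ne w hw z hz1)
      ⟨hy2, (hkey w hw y hy1).symm, hkey w hw z hz1, hz2.symm⟩
  · intro x hx
    by_contra hcon
    have c2 : 1 < nbrIn G (starSet G a A) x := by omega
    obtain ⟨u, hu, v, hv, huv⟩ := Finset.one_lt_card.mp c2
    obtain ⟨hu1, hu2⟩ := Finset.mem_filter.mp hu
    obtain ⟨hv1, hv2⟩ := Finset.mem_filter.mp hv
    obtain ⟨w, hw⟩ := hBstar
    have hxw : x ≠ w := fun e => hx (e ▸ hw)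
    exact hC4 x u w v hu2.ne hxw hv2.ne (hAB_ne u hu1 w hw) huv
      (hAB_ne v hv1 w hw).symm
      ⟨hu2, hkey u hu1 w hw, (hkey v hv1 w hw).symm, hv2.symm⟩
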